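/- The map F : ℝ × (0, π/2) → ℝ², F(ψ, t) = (sinh ψ · sin t, cosh ψ · tan t), is a bijection from ℝ × (0, π/2) onto the set B = {(X, Y) ∈ ℝ² : Y > |X|}. -/

import Mathlib

open Real

private lemma aux_sq (u v Z : ℝ) (hZ : 0 ≤ Z)
    (h : (1 - u + Z) * v = (1 - v + Z) * u) : u = v := by nlinarith

set_option maxHeartbeats 2000000 in
/-- The map `F(ψ, t) = (sinh ψ · sin t, cosh ψ · tan t)` is a bijection from
`ℝ × (0, π/2)` onto `B = {(X, Y) : Y > |X|}`. -/
theorem stmt_6 (F : ℝ × ℝ → ℝ × ℝ)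
    (hF : ∀ p : ℝ × ℝ, F p = (sinh p.1 * sin p.2, cosh p.1 * tan p.2)) :
    Set.BijOn F (Set.univ ×ˢ Set.Ioo 0 (π / 2))
      {q : ℝ × ℝ | q.2 > |q.1|} := by
  have hpi := pi_pos
  refine ⟨?_, ?_, ?_⟩
  · -- MapsTo
    rintro ⟨ψ, t⟩ ⟨-, ht0, ht1⟩
    simp only [hF, Set.mem_setOf_eq]
    have hs : 0 < sin t := sin_pos_of_pos_of_lt_pi ht0 (by linarith)
    have hc : 0 < cos t := cos_pos_of_mem_Ioo ⟨by linarith, ht1⟩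
    have hc1 : cos t ≤ 1 := cos_le_one t
    have htan : sin t ≤ tan t := by
      rw [tan_eq_sin_div_cos, le_div_iff₀ hc]
      nlinarith
    have habs : |sinh ψ| < cosh ψ := by
      have h1 := cosh_sq ψ
      have h2 := cosh_pos ψ
      have h3 := sq_abs (sinh ψ)
      nlinarith [abs_nonneg (sinh ψ)]
    have : |sinh ψ * sin t| = |sinh ψ| * sin t := by
      rw [abs_mul, abs_of_pos hs]
    rw [this]
    calc |sinh ψ| * sin t < cosh ψ * sin t := by
          exact mul_lt_mul_of_pos_right habs hs
      _ ≤ cosh ψ * tan t := by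
          exact mul_le_mul_of_nonneg_left htan (cosh_pos ψ).le
  · -- InjOn
    rintro ⟨ψ₁, t₁⟩ ⟨-, h10, h11⟩ ⟨ψ₂, t₂⟩ ⟨-, h20, h21⟩ heq
    rw [hF, hF, Prod.ext_iff] at heq
    obtain ⟨e1, e2⟩ := heq
    simp only at e1 e2 h10 h11 h20 h21
    have hs1 : 0 < sin t₁ := sin_pos_of_pos_of_lt_pi h10 (by linarith)
    have hc1 : 0 < cos t₁ := cos_pos_of_mem_Ioo ⟨by linarith, h11⟩
    have hs2 : 0 < sin t₂ := sin_pos_of_pos_of_lt_pi h20 (by linarith)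
    have hc2 : 0 < cos t₂ := cos_pos_of_mem_Ioo ⟨by linarith, h21⟩
    rw [tan_eq_sin_div_cos, tan_eq_sin_div_cos] at e2
    have e2' : cosh ψ₁ * sin t₁ * cos t₂ = cosh ψ₂ * sin t₂ * cos t₁ := by
      field_simp at e2
      linarith
    have p1 := sin_sq_add_cos_sq t₁
    have p2 := sin_sq_add_cos_sq t₂
    have q1 := cosh_sq ψ₁
    have q2 := cosh_sq ψ₂
    -- squared version of e2'
    have key : cos t₁ ^ 2 = cos t₂ ^ 2 := by
      have sq2 : (cosh ψ₁ * sin t₁) ^ 2 * cos t₂ ^ 2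
          = (cosh ψ₂ * sin t₂) ^ 2 * cos t₁ ^ 2 := by
        calc (cosh ψ₁ * sin t₁) ^ 2 * cos t₂ ^ 2
            = (cosh ψ₁ * sin t₁ * cos t₂) ^ 2 := by ring
          _ = (cosh ψ₂ * sin t₂ * cos t₁) ^ 2 := by rw [e2']
          _ = (cosh ψ₂ * sin t₂) ^ 2 * cos t₁ ^ 2 := by ring
      have r1 : (cosh ψ₁ * sin t₁) ^ 2 = sin t₁ ^ 2 + (sinh ψ₁ * sin t₁) ^ 2 := by
        nlinarith
      have r2 : (cosh ψ₂ * sin t₂) ^ 2 = sin t₂ ^ 2 + (sinh ψ₂ * sin t₂) ^ 2 := by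
        nlinarith
      rw [r1, r2, e1] at sq2
      have s1 : sin t₁ ^ 2 = 1 - cos t₁ ^ 2 := by linarith
      have s2 : sin t₂ ^ 2 = 1 - cos t₂ ^ 2 := by linarith
      rw [s1, s2] at sq2
      exact aux_sq _ _ _ (sq_nonneg (sinh ψ₂ * sin t₂)) sq2
    have hct : cos t₁ = cos t₂ := by
      have habs : |cos t₁| = |cos t₂| := by
        rw [← Real.sqrt_sq_eq_abs, ← Real.sqrt_sq_eq_abs, key]
      rwa [abs_of_pos hc1, abs_of_pos hc2] at habs
    have ht : t₁ = t₂ := by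
      apply injOn_cos ⟨h10.le, by linarith⟩ ⟨h20.le, by linarith⟩ hct
    subst ht
    have hψ : sinh ψ₁ = sinh ψ₂ := by
      have := mul_right_cancel₀ (ne_of_gt hs1) e1
      exact this
    exact Prod.ext (sinh_injective hψ) rfl
  · -- SurjOn
    rintro ⟨X, Y⟩ hXY
    simp only [Set.mem_setOf_eq] at hXY
    have hY : 0 < Y := lt_of_le_of_lt (abs_nonneg X) hXY
    have hX2 : X ^ 2 < Y ^ 2 := by
      have := sq_abs X
      nlinarith [abs_nonneg X]
    have hden : (0:ℝ) < 1 + Y ^ 2 := by positivity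
    set c : ℝ := Real.sqrt ((1 + X ^ 2) / (1 + Y ^ 2)) with hcdef
    have hfrac_pos : 0 < (1 + X ^ 2) / (1 + Y ^ 2) := by positivity
    have hfrac_lt : (1 + X ^ 2) / (1 + Y ^ 2) < 1 := by
      rw [div_lt_one hden]; linarith
    have hc_pos : 0 < c := Real.sqrt_pos.2 hfrac_pos
    have hc_lt : c < 1 := by
      rw [hcdef]
      calc Real.sqrt ((1 + X ^ 2) / (1 + Y ^ 2)) < Real.sqrt 1 :=
            Real.sqrt_lt_sqrt hfrac_pos.le hfrac_lt
        _ = 1 := Real.sqrt_one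
    have hc2 : c ^ 2 = (1 + X ^ 2) / (1 + Y ^ 2) := Real.sq_sqrt hfrac_pos.le
    set t : ℝ := Real.arccos c with htdef
    have ht0 : 0 < t := Real.arccos_pos.2 hc_lt
    have ht1 : t < π / 2 := Real.arccos_lt_pi_div_two.2 hc_pos
    have hcost : cos t = c := Real.cos_arccos (by linarith) hc_lt.le
    have hsint : sin t = Real.sqrt (1 - c ^ 2) := Real.sin_arccos c
    have h1c2 : 0 < 1 - c ^ 2 := by nlinarith
    have hsin_pos : 0 < sin t := by
      rw [hsint]; exact Real.sqrt_pos.2 h1c2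
    have hsin2 : sin t ^ 2 = 1 - c ^ 2 := by
      rw [hsint]; exact Real.sq_sqrt h1c2.le
    set ψ : ℝ := Real.arsinh (X / sin t) with hψdef
    refine ⟨(ψ, t), ⟨Set.mem_univ _, ht0, ht1⟩, ?_⟩
    rw [hF]
    simp only
    have hXeq : sinh ψ * sin t = X := by
      rw [hψdef, Real.sinh_arsinh, div_mul_cancel₀ _ (ne_of_gt hsin_pos)]
    have hcosh : cosh ψ = Real.sqrt (1 + (X / sin t) ^ 2) :=
      Real.cosh_arsinh _
    clear_value ψ t c
    have hYeq : cosh ψ * tan t = Y := by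
      have hpos : 0 < cosh ψ * tan t := by
        apply mul_pos (cosh_pos ψ)
        rw [tan_eq_sin_div_cos, hcost]
        positivity
      have hsq : (cosh ψ * tan t) ^ 2 = Y ^ 2 := by
        have hch2 : cosh ψ ^ 2 = 1 + (X / sin t) ^ 2 := by
          rw [hcosh]; exact Real.sq_sqrt (by positivity)
        rw [mul_pow, hch2, tan_eq_sin_div_cos, hcost, div_pow, div_pow]
        have hs2 : sin t ^ 2 = (Y ^ 2 - X ^ 2) / (1 + Y ^ 2) := by
          rw [hsin2, hc2]; field_simp; ring
        rw [hs2, hc2]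
        have h1 : Y ^ 2 - X ^ 2 ≠ 0 := by nlinarith
        have h2 : (1:ℝ) + Y ^ 2 ≠ 0 := by positivity
        have h3 : (1:ℝ) + X ^ 2 ≠ 0 := by positivity
        field_simp
        ring
      nlinarith [hpos, hY]
    rw [hXeq, hYeq]
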